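/- Let p_i, p_j, p_k ∈ ℝ² and q_i, q_j, q_k ∈ ℝ² with q_i = cR(θ)p_i + ξ and q_j = cR(θ)p_j + ξ for some c ≠ 0, rotation R(θ), and ξ ∈ ℝ². Suppose A_i p_i + A_j p_j + A_k p_k = 0 and A_i q_i + A_j q_j + A_k q_k = 0, where A_i, A_j are scaled rotation matrices (of the form aI₂ + bJ with J the π/2 rotation) and A_k = -sin(α)I₂ with sin α ≠ 0. Then q_k = cR(θ)p_k + ξ. -/

import Mathlib

noncomputable def Rot (θ : ℝ) : Matrix (Fin 2) (Fin 2) ℝ :=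
  !![Real.cos θ, -Real.sin θ; Real.sin θ, Real.cos θ]

def Jmat : Matrix (Fin 2) (Fin 2) ℝ := !![0, -1; 1, 0]

/-- A matrix is a scaled rotation matrix if it has the form aI₂ + bJ. -/
def IsScaledRotation (A : Matrix (Fin 2) (Fin 2) ℝ) : Prop :=
  ∃ a b : ℝ, A = a • (1 : Matrix (Fin 2) (Fin 2) ℝ) + b • Jmat

/-- Induction step of Lemma 1: if two triples satisfy the same angle-induced
linear constraint and two of the points are related by a similarity transform,
then so is the third. -/
theorem angle_constraint_similarity_step
    (pi pj pk qi qj qk ξ : Fin 2 → ℝ)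
    (Ai Aj Ak : Matrix (Fin 2) (Fin 2) ℝ) (c θ α : ℝ)
    (hc : c ≠ 0) (hα : Real.sin α ≠ 0)
    (hAi : IsScaledRotation Ai) (hAj : IsScaledRotation Aj)
    (hAk : Ak = (-Real.sin α) • (1 : Matrix (Fin 2) (Fin 2) ℝ))
    (hsum : Ai + Aj + Ak = 0)
    (hqi : qi = c • (Rot θ).mulVec pi + ξ)
    (hqj : qj = c • (Rot θ).mulVec pj + ξ)
    (hp : Ai.mulVec pi + Aj.mulVec pj + Ak.mulVec pk = 0)
    (hq : Ai.mulVec qi + Aj.mulVec qj + Ak.mulVec qk = 0) :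
    qk = c • (Rot θ).mulVec pk + ξ := by
  obtain ⟨a1, b1, rfl⟩ := hAi
  obtain ⟨a2, b2, rfl⟩ := hAj
  subst hAk hqi hqj
  have hs0 := congrFun (congrFun hsum 0) 0
  have hs1 := congrFun (congrFun hsum 0) 1
  have hp0 := congrFun hp 0
  have hp1 := congrFun hp 1
  have hq0 := congrFun hq 0
  have hq1 := congrFun hq 1
  simp [Rot, Jmat, Matrix.mulVec, dotProduct, Fin.sum_univ_two,
    Matrix.add_apply, Matrix.smul_apply, Matrix.one_apply, Matrix.smul_apply,
    Pi.add_apply, Pi.smul_apply, smul_eq_mul, Matrix.cons_val_zero,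
    Matrix.cons_val_one, Matrix.head_cons, Matrix.vecHead, Matrix.vecTail] at hs0 hs1 hp0 hp1 hq0 hq1 ⊢
  funext i
  fin_cases i
  · have h : Real.sin α * qk 0 = Real.sin α * (c * (Real.cos θ * pk 0 - Real.sin θ * pk 1) + ξ 0) := by
      linear_combination (-1) * hq0 + (c*Real.cos θ) * hp0 - (c*Real.sin θ) * hp1
        + (ξ 0) * hs0 + (ξ 1) * hs1
    simpa [sub_eq_add_neg] using mul_left_cancel₀ hα h
  · have h : Real.sin α * qk 1 = Real.sin α * (c * (Real.sin θ * pk 0 + Real.cos θ * pk 1) + ξ 1) := by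
      linear_combination (-1) * hq1 + (c*Real.sin θ) * hp0 + (c*Real.cos θ) * hp1
        + (ξ 1) * hs0 - (ξ 0) * hs1
    simpa using mul_left_cancel₀ hα h
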